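/- Let k ≥ 1 and n ≥ k+1 be integers, and let G be a simple (unweighted, undirected) graph on n vertices that contains no independent set of size k+1. Then the number of edges of G is at least binom(n, k+1)/binom(n−2, k−1) = n(n−1)/((k+1)k). -/

import Mathlib

lemma fiber_card {α : Type*} [DecidableEq α] (s t : Finset α) (ht : t ⊆ s) (m : ℕ) :
    ((s.powersetCard (m + t.card)).filter (fun S => t ⊆ S)).card = (s \ t).card.choose m := by
  rw [← Finset.card_powersetCard m (s \ t)]
  apply Finset.card_bij' (fun S _ => S \ t) (fun A _ => A ∪ t)
  · intro S hS
    simp only [Finset.mem_filter, Finset.mem_powersetCard] at hS ⊢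
    obtain ⟨⟨hSs, hScard⟩, htS⟩ := hS
    constructor
    · intro x hx
      simp only [Finset.mem_sdiff] at hx ⊢
      exact ⟨hSs hx.1, hx.2⟩
    · rw [Finset.card_sdiff_of_subset htS, hScard, Nat.add_sub_cancel]
  · intro A hA
    simp only [Finset.mem_powersetCard, Finset.mem_filter] at hA ⊢
    obtain ⟨hAs, hAcard⟩ := hA
    have hdisj : Disjoint A t := by
      refine Finset.disjoint_left.2 fun x hx hxt => ?_
      exact (Finset.mem_sdiff.1 (hAs hx)).2 hxt
    refine ⟨⟨?_, ?_⟩, Finset.subset_union_right⟩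
    · exact Finset.union_subset (hAs.trans (Finset.sdiff_subset)) ht
    · rw [Finset.card_union_of_disjoint hdisj, hAcard]
  · intro S hS
    simp only [Finset.mem_filter] at hS
    exact Finset.sdiff_union_of_subset hS.2
  · intro A hA
    simp only [Finset.mem_powersetCard] at hA
    rw [Finset.union_sdiff_right, Finset.sdiff_eq_self_iff_disjoint.2]
    refine Finset.disjoint_left.2 fun x hx hxt => ?_
    exact (Finset.mem_sdiff.1 (hA.1 hx)).2 hxt

theorem stmt_5 (n k : ℕ) (hk : 1 ≤ k) (hn : k + 1 ≤ n)
    (G : SimpleGraph (Fin n)) [DecidableRel G.Adj]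
    (hindep : ∀ s : Finset (Fin n),
      (∀ u ∈ s, ∀ v ∈ s, u ≠ v → ¬ G.Adj u v) → s.card ≤ k) :
    ((n : ℝ) * ((n : ℝ) - 1)) / (((k : ℝ) + 1) * k) ≤ (G.edgeFinset.card : ℝ) := by
  classical
  set T : Finset (Finset (Fin n)) := (Finset.univ : Finset (Fin n)).powersetCard (k + 1) with hT
  set B : Finset (Sym2 (Fin n) × Finset (Fin n)) :=
    (G.edgeFinset ×ˢ T).filter (fun p => ∀ v ∈ p.1, v ∈ p.2) with hB
  -- count by second coordinate: each S ∈ T contributes at least 1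
  have count2 : T.card ≤ B.card := by
    have h1 : B.card = ∑ S ∈ T, (B.filter (fun p => p.2 = S)).card := by
      apply Finset.card_eq_sum_card_fiberwise
      intro p hp
      simp only [hB, Finset.mem_coe, Finset.mem_filter, Finset.mem_product] at hp
      exact hp.1.2
    rw [h1]
    have h2 : ∀ S ∈ T, 1 ≤ (B.filter (fun p => p.2 = S)).card := by
      intro S hS
      rw [Finset.one_le_card]
      simp only [hT, Finset.mem_powersetCard] at hS
      -- S has card k+1 > k, so not independent
      by_contra hempty
      rw [Finset.not_nonempty_iff_eq_empty, Finset.filter_eq_empty_iff] at hempty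
      have hind : ∀ u ∈ S, ∀ v ∈ S, u ≠ v → ¬ G.Adj u v := by
        intro u hu v hv huv hadj
        refine hempty (x := (s(u, v), S)) ?_ rfl
        simp only [hB, Finset.mem_filter, Finset.mem_product]
        refine ⟨⟨?_, ?_⟩, ?_⟩
        · rwa [SimpleGraph.mem_edgeFinset, SimpleGraph.mem_edgeSet]
        · simp [hT, hS]
        · intro w hw
          rcases Sym2.mem_iff.1 hw with rfl | rfl <;> assumption
      have := hindep S hind
      omega
    calc T.card = ∑ S ∈ T, 1 := by simp
      _ ≤ ∑ S ∈ T, (B.filter (fun p => p.2 = S)).card := Finset.sum_le_sum h2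
  -- count by first coordinate: each edge contributes exactly C(n-2, k-1)
  have count1 : B.card = G.edgeFinset.card * (n - 2).choose (k - 1) := by
    have h1 : B.card = ∑ e ∈ G.edgeFinset, (B.filter (fun p => p.1 = e)).card := by
      apply Finset.card_eq_sum_card_fiberwise
      intro p hp
      simp only [hB, Finset.mem_coe, Finset.mem_filter, Finset.mem_product] at hp
      exact hp.1.1
    rw [h1]
    rw [Finset.sum_congr rfl (fun e he => ?_), Finset.sum_const, smul_eq_mul]
    -- fiber card for fixed edge e
    induction e with
    | h u v =>
      have hadj : G.Adj u v := by rwa [SimpleGraph.mem_edgeFinset, SimpleGraph.mem_edgeSet] at he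
      have hne : u ≠ v := hadj.ne
      have hcard2 : ({u, v} : Finset (Fin n)).card = 2 := by
        rw [Finset.card_insert_of_notMem (by simp [hne]), Finset.card_singleton]
      have key := fiber_card (Finset.univ : Finset (Fin n)) {u, v} (Finset.subset_univ _) (k - 1)
      rw [hcard2] at key
      have hk1 : k - 1 + 2 = k + 1 := by omega
      rw [hk1] at key
      have hcards : ((Finset.univ : Finset (Fin n)) \ {u, v}).card = n - 2 := by
        rw [Finset.card_sdiff_of_subset (Finset.subset_univ _), hcard2, Finset.card_univ, Fintype.card_fin]
      rw [hcards] at key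
      rw [← key]
      apply Finset.card_bij (fun p _ => p.2)
      · intro p hp
        simp only [hB, hT, Finset.mem_filter, Finset.mem_product, Finset.mem_powersetCard] at hp ⊢
        obtain ⟨⟨⟨_, hST⟩, hall⟩, hpe⟩ := hp
        refine ⟨hST, fun x hx => ?_⟩
        rcases Finset.mem_insert.1 hx with rfl | hx
        · exact hall x (by rw [hpe]; simp)
        · rw [Finset.mem_singleton] at hx; subst hx; exact hall x (by rw [hpe]; simp)
      · rintro ⟨e1, S1⟩ hp ⟨e2, S2⟩ hq h
        simp only [hB, Finset.mem_filter] at hp hq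
        simp only at h
        simp [h, hp.2, hq.2]
      · intro S hS
        simp only [hT, Finset.mem_filter, Finset.mem_powersetCard] at hS
        refine ⟨(s(u, v), S), ?_, rfl⟩
        simp only [hB, hT, Finset.mem_filter, Finset.mem_product, Finset.mem_powersetCard]
        refine ⟨⟨⟨he, hS.1⟩, ?_⟩, trivial⟩
        intro w hw
        rcases Sym2.mem_iff.1 hw with rfl | rfl
        · exact hS.2 (by simp)
        · exact hS.2 (by simp)
  -- combine into the key nat inequality
  have key : n.choose (k + 1) ≤ G.edgeFinset.card * (n - 2).choose (k - 1) := by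
    rw [← count1]
    have : T.card = n.choose (k + 1) := by
      rw [hT, Finset.card_powersetCard, Finset.card_univ, Fintype.card_fin]
    omega
  -- the binomial identity
  have ident : n.choose (k + 1) * ((k + 1) * k) = n * (n - 1) * (n - 2).choose (k - 1) := by
    obtain ⟨a, rfl⟩ : ∃ a, n = a + 2 := ⟨n - 2, by omega⟩
    obtain ⟨b, rfl⟩ : ∃ b, k = b + 1 := ⟨k - 1, by omega⟩
    simp only [Nat.add_sub_cancel, show a + 2 - 1 = a + 1 by omega, show b + 1 - 1 = b by omega]
    have h1 := Nat.add_one_mul_choose_eq (a + 1) (b + 1)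
    have h2 := Nat.add_one_mul_choose_eq a b
    calc (a + 2).choose (b + 2) * ((b + 1 + 1) * (b + 1))
        = ((a + 2).choose (b + 2) * (b + 2)) * (b + 1) := by ring
      _ = ((a + 1 + 1) * (a + 1).choose (b + 1)) * (b + 1) := by rw [← h1]
      _ = (a + 2) * ((a + 1).choose (b + 1) * (b + 1)) := by ring
      _ = (a + 2) * ((a + 1) * a.choose b) := by rw [h2]
      _ = (a + 2) * (a + 1) * a.choose b := by ring
  -- get n(n-1) ≤ card * (k+1) * k
  have hcpos : 0 < (n - 2).choose (k - 1) := Nat.choose_pos (by omega)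
  have main : n * (n - 1) ≤ G.edgeFinset.card * ((k + 1) * k) := by
    have h3 : n * (n - 1) * (n - 2).choose (k - 1) ≤
        G.edgeFinset.card * ((k + 1) * k) * (n - 2).choose (k - 1) := by
      calc n * (n - 1) * (n - 2).choose (k - 1) = n.choose (k + 1) * ((k + 1) * k) := ident.symm
        _ ≤ G.edgeFinset.card * (n - 2).choose (k - 1) * ((k + 1) * k) :=
            Nat.mul_le_mul_right _ key
        _ = G.edgeFinset.card * ((k + 1) * k) * (n - 2).choose (k - 1) := by ring
    exact Nat.le_of_mul_le_mul_right h3 hcpos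
  -- finish over ℝ
  have hkpos : (0 : ℝ) < ((k : ℝ) + 1) * k := by positivity
  rw [div_le_iff₀ hkpos]
  have h1 : (1 : ℝ) ≤ n := by exact_mod_cast (by omega : 1 ≤ n)
  have := (Nat.cast_le (α := ℝ)).2 main
  push_cast at this
  calc (n : ℝ) * ((n : ℝ) - 1) = (n : ℝ) * (((n : ℝ) - 1)) := rfl
    _ = ((n : ℝ) * ((n - 1 : ℕ) : ℝ)) := by
        congr 1
        rw [Nat.cast_sub (by omega : 1 ≤ n)]; norm_num
    _ ≤ G.edgeFinset.card * ((k + 1) * k) := by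
        rw [Nat.cast_sub (by omega : 1 ≤ n)] at this ⊢
        push_cast at this ⊢
        linarith
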